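/- Let a,b,c,d be nonnegative integers with ad < bc and bc > (ad-bc)^2, let 0 < p < 1, and define the two-variable recursion u_0 = w_0 = z, u_{n+1} = (u_n^a w_n^b - (1-p))/p, w_{n+1} = (u_n^c w_n^d - (1-p))/p. There exists R = R(p) > 1 such that: for every z ∈ ℂ and every n ≥ 0, if |u_{n+1}(z)| ≤ R then |u_n(z)| ≤ R. Consequently the sets K_n = {z : |u_n(z)| ≤ R} are nested decreasing and {z : (u_n(z))_n bounded} = ⋂_n K_n. -/

import Mathlib

private lemma abs_aux (x y : ℂ) :
    ‖x‖ - ‖y‖ ≤ ‖x + y‖ := by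
  have h := norm_add_le (x + y) (-y)
  simp only [add_neg_cancel_right, norm_neg] at h
  linarith

private lemma aux1 {a b c d e : ℕ} (heq : e + a * d = b * c) {X Y P : ℝ}
    (hX : 0 ≤ X) (hY : 0 ≤ Y) (hP : 0 ≤ P)
    (h1 : P ≤ X ^ a * Y ^ b) (h2 : X ^ c * Y ^ d ≤ 1) :
    P ^ c ≤ Y ^ e ∧ X ^ e * P ^ d ≤ 1 := by
  have hbc : b * c = e + a * d := heq.symm
  have e1 : (X ^ a * Y ^ b) ^ c = (X ^ c * Y ^ d) ^ a * Y ^ e := by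
    rw [mul_pow, mul_pow, ← pow_mul, ← pow_mul, ← pow_mul, ← pow_mul, hbc, pow_add]
    ring
  have e2 : X ^ e * (X ^ a * Y ^ b) ^ d = (X ^ c * Y ^ d) ^ b := by
    rw [mul_pow, mul_pow, ← pow_mul, ← pow_mul, ← pow_mul, ← pow_mul, ← mul_assoc,
      ← pow_add, heq]
    ring
  have hXYn : 0 ≤ X ^ c * Y ^ d := by positivity
  constructor
  · calc P ^ c ≤ (X ^ a * Y ^ b) ^ c := pow_le_pow_left₀ hP h1 c
      _ = (X ^ c * Y ^ d) ^ a * Y ^ e := e1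
      _ ≤ 1 ^ a * Y ^ e := by
          exact mul_le_mul_of_nonneg_right (pow_le_pow_left₀ hXYn h2 a) (by positivity)
      _ = Y ^ e := by rw [one_pow, one_mul]
  · calc X ^ e * P ^ d ≤ X ^ e * (X ^ a * Y ^ b) ^ d := by
          exact mul_le_mul_of_nonneg_left (pow_le_pow_left₀ hP h1 d) (by positivity)
      _ = (X ^ c * Y ^ d) ^ b := e2
      _ ≤ 1 ^ b := pow_le_pow_left₀ hXYn h2 b
      _ = 1 := one_pow b

set_option maxHeartbeats 2000000 in
/-- With `ad < bc`, `bc > (ad-bc)^2`, `0 < p < 1` and the two-variable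
recursion in the parameter `z` (`u 0 z = w 0 z = z`), there exists `R > 1` such that
`|u (n+1) z| ≤ R → |u n z| ≤ R`; consequently the sets `K n = {z : |u n z| ≤ R}` are
nested decreasing and the boundedness locus equals `⋂ n, K n`. -/
theorem stmt13 (a b c d : ℕ) (hdet : a * d < b * c)
    (hdet2 : ((a : ℤ) * d - b * c) ^ 2 < (b : ℤ) * c)
    (p : ℝ) (hp : 0 < p) (hp1 : p < 1)
    (u w : ℕ → ℂ → ℂ)
    (hu0 : ∀ z, u 0 z = z) (hw0 : ∀ z, w 0 z = z)
    (hu : ∀ n z, u (n + 1) z = ((u n z) ^ a * (w n z) ^ b - (1 - (p : ℂ))) / (p : ℂ))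
    (hw : ∀ n z, w (n + 1) z = ((u n z) ^ c * (w n z) ^ d - (1 - (p : ℂ))) / (p : ℂ)) :
    ∃ R : ℝ, 1 < R ∧
      (∀ (z : ℂ) (n : ℕ), ‖u (n + 1) z‖ ≤ R → ‖u n z‖ ≤ R) ∧
      (∀ n : ℕ, {z : ℂ | ‖u (n + 1) z‖ ≤ R} ⊆
        {z : ℂ | ‖u n z‖ ≤ R}) ∧
      {z : ℂ | ∃ C : ℝ, ∀ n, ‖u n z‖ ≤ C} =
        ⋂ n, {z : ℂ | ‖u n z‖ ≤ R} := by
  have hq0 : 0 < 1 - p := by linarith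
  have hpne : (p : ℂ) ≠ 0 := by
    simpa using hp.ne'
  -- basic facts on the exponents
  have hb0 : b ≠ 0 := by rintro rfl; simp at hdet
  have hc0 : c ≠ 0 := by rintro rfl; simp at hdet
  have hbc1 : (1 : ℤ) ≤ (b : ℤ) * (c : ℤ) := by
    have h := Nat.one_le_iff_ne_zero.2 (Nat.mul_ne_zero hb0 hc0)
    exact_mod_cast h
  have ha0 : a ≠ 0 := by
    rintro rfl
    simp only [Nat.cast_zero, zero_mul, zero_sub, neg_sq] at hdet2
    nlinarith
  have hd0 : d ≠ 0 := by
    rintro rfl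
    simp only [Nat.cast_zero, mul_zero, zero_sub, neg_sq] at hdet2
    nlinarith
  set E : ℕ := b * c - a * d with hEdef
  have hE0 : E ≠ 0 := by omega
  have heq : E + a * d = b * c := by omega
  have hEcast : (E : ℤ) = (b : ℤ) * c - (a : ℤ) * d := by
    rw [hEdef]; push_cast [Nat.cast_sub hdet.le]; ring
  have hEbc : E * E + 1 ≤ b * c := by
    have h2 : (E : ℤ) * E < (b : ℤ) * c := by nlinarith [hdet2]
    have : E * E < b * c := by exact_mod_cast h2
    omega
  -- the constant R
  set K : ℕ := b * E + b * c + E + 1 with hKdef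
  set R : ℝ := (2 / p) ^ (K + 1) with hRdef
  have h2p : (2 : ℝ) ≤ 2 / p := by rw [le_div_iff₀ hp]; nlinarith
  have h1p : (1 : ℝ) < 2 / p := by linarith
  have hR1 : 1 < R := one_lt_pow₀ h1p (by omega)
  have hR0 : (0 : ℝ) < R := by linarith
  have hpR : p * R = (2 / p) ^ K * 2 := by
    rw [hRdef, pow_succ]
    field_simp
  have hpR2 : 2 ≤ p * R := by
    rw [hpR]
    nlinarith [one_le_pow₀ h1p.le (n := K)]
  set P : ℝ := p * R - (1 - p) with hPdef
  have hPK : (2 / p) ^ K ≤ P := by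
    rw [hPdef, hpR]
    nlinarith [one_le_pow₀ h1p.le (n := K)]
  have hEK : E ≤ K :=
    le_trans (Nat.le_add_left E (b * E + b * c)) (Nat.le_succ _)
  have hPe : (2 / p) ^ E ≤ P := by
    refine le_trans (pow_le_pow_right₀ h1p.le hEK) hPK
  have hP2 : (2 : ℝ) ≤ P := by
    have : (2 : ℝ) ≤ (2 / p) ^ E := by
      calc (2 : ℝ) ≤ 2 / p := h2p
        _ = (2 / p) ^ 1 := (pow_one _).symm
        _ ≤ (2 / p) ^ E := pow_le_pow_right₀ h1p.le (by omega)
    linarith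
  have hP1 : (1 : ℝ) ≤ P := by linarith
  have hP0 : (0 : ℝ) < P := by linarith
  have hPR2 : p * R / 2 ≤ P := by rw [hPdef]; linarith
  -- the final quantitative inequality for the descent
  have hfinal : R ^ (E * E) < (p / 2) ^ (b * E) * P ^ (b * c) := by
    have hsplit : (p / 2 : ℝ) ^ (b * E + b * c) * R = (2 / p) ^ (E + 2) := by
      have hKsum : K + 1 = (b * E + b * c) + (E + 2) := by omega
      have hone : ((p / 2) * (2 / p) : ℝ) = 1 := by field_simp
      have hRsplit : R = (2 / p) ^ (b * E + b * c) * (2 / p) ^ (E + 2) := by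
        rw [hRdef, hKsum, pow_add]
      calc (p / 2 : ℝ) ^ (b * E + b * c) * R
          = ((p / 2) * (2 / p)) ^ (b * E + b * c) * (2 / p) ^ (E + 2) := by
            rw [hRsplit, mul_pow]; ring
        _ = (2 / p) ^ (E + 2) := by rw [hone, one_pow, one_mul]
    have h1 : ((p / 2 : ℝ)) ^ (b * c) * R ^ (b * c) ≤ P ^ (b * c) := by
      rw [← mul_pow]
      refine pow_le_pow_left₀ (by positivity) ?_ _
      calc p / 2 * R = p * R / 2 := by ring
        _ ≤ P := hPR2
    have h2 : R ^ (E * E + 1) ≤ R ^ (b * c) := pow_le_pow_right₀ hR1.le hEbc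
    have h3 : (0 : ℝ) < (p / 2) ^ (b * E) := by positivity
    have h4 : (0 : ℝ) < (p / 2) ^ (b * c) := by positivity
    have h5 : (1 : ℝ) < (2 / p) ^ (E + 2) := one_lt_pow₀ h1p (by omega)
    have key : (p / 2 : ℝ) ^ (b * E) * ((p / 2) ^ (b * c) * R ^ (E * E + 1))
        = (2 / p) ^ (E + 2) * R ^ (E * E) := by
      rw [pow_succ, ← mul_assoc, ← mul_assoc, ← pow_add]
      rw [mul_assoc ((p / 2 : ℝ) ^ (b * E + b * c)), mul_comm (R ^ (E * E)) R,
        ← mul_assoc, hsplit]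
    have h6 : (p / 2 : ℝ) ^ (b * E) * ((p / 2) ^ (b * c) * R ^ (E * E + 1))
        ≤ (p / 2) ^ (b * E) * P ^ (b * c) := by
      refine mul_le_mul_of_nonneg_left ?_ h3.le
      calc (p / 2 : ℝ) ^ (b * c) * R ^ (E * E + 1) ≤ (p / 2) ^ (b * c) * R ^ (b * c) :=
            mul_le_mul_of_nonneg_left h2 h4.le
        _ ≤ P ^ (b * c) := h1
    have h7 : R ^ (E * E) < (2 / p) ^ (E + 2) * R ^ (E * E) := by
      nlinarith [pow_pos hR0 (E * E)]
    calc R ^ (E * E) < (2 / p) ^ (E + 2) * R ^ (E * E) := h7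
      _ = (p / 2) ^ (b * E) * ((p / 2) ^ (b * c) * R ^ (E * E + 1)) := key.symm
      _ ≤ (p / 2) ^ (b * E) * P ^ (b * c) := h6
  -- recursion identities in terms of absolute values
  have hrecU : ∀ n z, ‖(p : ℂ) * u (n + 1) z + (1 - (p : ℂ))‖
      = ‖u n z‖ ^ a * ‖w n z‖ ^ b := by
    intro n z
    have h : (p : ℂ) * u (n + 1) z + (1 - (p : ℂ)) = u n z ^ a * w n z ^ b := by
      rw [hu]; field_simp; ring
    rw [h, norm_mul, norm_pow, norm_pow]
  have hrecW : ∀ n z, ‖(p : ℂ) * w (n + 1) z + (1 - (p : ℂ))‖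
      = ‖u n z‖ ^ c * ‖w n z‖ ^ d := by
    intro n z
    have h : (p : ℂ) * w (n + 1) z + (1 - (p : ℂ)) = u n z ^ c * w n z ^ d := by
      rw [hw]; field_simp; ring
    rw [h, norm_mul, norm_pow, norm_pow]
  -- triangle inequality bounds
  have habsp : ∀ x : ℂ, ‖(p : ℂ) * x‖ = p * ‖x‖ := by
    intro x; rw [norm_mul, Complex.norm_real, Real.norm_of_nonneg hp.le]
  have habsq : ‖1 - (p : ℂ)‖ = 1 - p := by
    have h : (1 - (p : ℂ)) = ((1 - p : ℝ) : ℂ) := by push_cast; ring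
    rw [h, Complex.norm_real, Real.norm_of_nonneg hq0.le]
  have htri1 : ∀ x : ℂ, p * ‖x‖ - (1 - p)
      ≤ ‖(p : ℂ) * x + (1 - (p : ℂ))‖ := by
    intro x
    have h := abs_aux ((p : ℂ) * x) (1 - (p : ℂ))
    rw [habsp, habsq] at h; linarith
  have htri2 : ∀ x : ℂ, ‖(p : ℂ) * x + (1 - (p : ℂ))‖
      ≤ p * ‖x‖ + (1 - p) := by
    intro x
    have h := norm_add_le ((p : ℂ) * x) (1 - (p : ℂ))
    rw [habsp, habsq] at h; linarith
  -- KEY LEMMA: along the orbit, whenever `|u n z| > R` we must have `|w n z| ≥ 1`.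
  have key : ∀ n z, R < ‖u n z‖ → 1 ≤ ‖w n z‖ := by
    intro n
    induction n using Nat.strong_induction_on with
    | _ n ih =>
      intro z hU
      by_contra hW
      push_neg at hW
      -- first level: bounds on |u (n-1)|, |w (n-1)| (when n ≥ 1)
      match n, hU, hW, ih with
      | 0, hU, hW, _ =>
        rw [hu0] at hU
        rw [hw0] at hW
        linarith
      | 1, hU, hW, _ =>
        -- |z|^a * |z|^b ≥ P > 1 while |z|^c * |z|^d ≤ 1 : contradiction
        have h1 : P ≤ ‖u 0 z‖ ^ a * ‖w 0 z‖ ^ b := by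
          have h0 := htri1 (u 1 z)
          rw [hrecU 0 z] at h0
          have := mul_lt_mul_of_pos_left hU hp
          linarith
        have h2 : ‖u 0 z‖ ^ c * ‖w 0 z‖ ^ d ≤ 1 := by
          have h0 := htri2 (w 1 z)
          rw [hrecW 0 z] at h0
          have := mul_lt_mul_of_pos_left hW hp
          linarith
        rw [hu0, hw0] at h1 h2
        rw [← pow_add] at h1 h2
        have hz1 : ‖z‖ ≤ 1 := by
          by_contra hgt
          push_neg at hgt
          have := one_lt_pow₀ hgt (n := c + d) (by omega)
          linarith
        have := pow_le_one₀ (norm_nonneg z) hz1 (n := a + b)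
        linarith
      | (m + 2), hU, hW, ih =>
        set X : ℝ := ‖u (m + 1) z‖ with hXdef
        set Y : ℝ := ‖w (m + 1) z‖ with hYdef
        have hXnn : 0 ≤ X := norm_nonneg _
        have hYnn : 0 ≤ Y := norm_nonneg _
        have h1 : P ≤ X ^ a * Y ^ b := by
          have h0 := htri1 (u (m + 2) z)
          rw [hrecU (m + 1) z] at h0
          have := mul_lt_mul_of_pos_left hU hp
          linarith
        have h2 : X ^ c * Y ^ d ≤ 1 := by
          have h0 := htri2 (w (m + 2) z)
          rw [hrecW (m + 1) z] at h0
          have := mul_lt_mul_of_pos_left hW hp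
          linarith
        obtain ⟨hYE, hXE⟩ := aux1 heq hXnn hYnn hP0.le h1 h2
        -- X ≤ 1 and Y ≥ 2/p
        have hX1 : X ≤ 1 := by
          by_contra hgt
          push_neg at hgt
          have hXe : 1 < X ^ E := one_lt_pow₀ hgt hE0
          have hPd : 1 ≤ P ^ d := one_le_pow₀ hP1
          have : X ^ E ≤ X ^ E * P ^ d := le_mul_of_one_le_right (by positivity) hPd
          linarith
        have hY2p : 2 / p ≤ Y := by
          by_contra hlt
          push_neg at hlt
          have h3 : Y ^ E < (2 / p) ^ E := pow_lt_pow_left₀ hlt hYnn hE0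
          have h4 : (2 / p) ^ E ≤ P ^ c := le_trans hPe (le_self_pow₀ hP1 hc0)
          linarith
        -- second level: bounds at index m
        set X' : ℝ := ‖u m z‖ with hX'def
        set Y' : ℝ := ‖w m z‖ with hY'def
        have hX'nn : 0 ≤ X' := norm_nonneg _
        have hY'nn : 0 ≤ Y' := norm_nonneg _
        have h3 : X' ^ a * Y' ^ b ≤ 1 := by
          have := htri2 (u (m + 1) z)
          rw [hrecU m z] at this
          nlinarith
        have h4 : p * Y / 2 ≤ X' ^ c * Y' ^ d := by
          have h5 := htri1 (w (m + 1) z)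
          rw [hrecW m z] at h5
          have h6 : 2 ≤ p * Y := by
            have := mul_le_mul_of_nonneg_left hY2p hp.le
            calc (2 : ℝ) = p * (2 / p) := by field_simp
              _ ≤ p * Y := this
          linarith
        have heq' : E + d * a = c * b := by
          rw [mul_comm d a, mul_comm c b]; exact heq
        have hZnn : 0 ≤ p * Y / 2 := by positivity
        obtain ⟨huE, -⟩ := aux1 heq' hY'nn hX'nn hZnn
          (by rw [mul_comm (Y' ^ d)]; exact h4) (by rw [mul_comm (Y' ^ b)]; exact h3)
        -- hence |u m z| is very large
        have hbig : R ^ (E * E) < X' ^ (E * E) := by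
          have c1 : ((p * Y / 2) ^ b) ^ E ≤ (X' ^ E) ^ E :=
            pow_le_pow_left₀ (by positivity) huE E
          rw [← pow_mul, ← pow_mul] at c1
          have c2 : (P ^ c) ^ b ≤ (Y ^ E) ^ b := pow_le_pow_left₀ (by positivity) hYE b
          rw [← pow_mul, ← pow_mul] at c2
          have c3 : (p * Y / 2) ^ (b * E) = (p / 2) ^ (b * E) * Y ^ (b * E) := by
            rw [← mul_pow]; ring_nf
          have c4 : (p / 2) ^ (b * E) * P ^ (b * c) ≤ (p / 2) ^ (b * E) * Y ^ (b * E) := by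
            refine mul_le_mul_of_nonneg_left ?_ (by positivity)
            calc P ^ (b * c) = P ^ (c * b) := by rw [mul_comm b c]
              _ ≤ Y ^ (E * b) := c2
              _ = Y ^ (b * E) := by rw [mul_comm E b]
          calc R ^ (E * E) < (p / 2) ^ (b * E) * P ^ (b * c) := hfinal
            _ ≤ (p / 2) ^ (b * E) * Y ^ (b * E) := c4
            _ = (p * Y / 2) ^ (b * E) := c3.symm
            _ ≤ X' ^ (E * E) := c1
        have hRX' : R < X' := by
          by_contra hle
          push_neg at hle
          have := pow_le_pow_left₀ hX'nn hle (E * E)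
          linarith
        -- by the induction hypothesis, |w m z| ≥ 1, contradicting h3
        have hY'1 : 1 ≤ Y' := ih m (by omega) z hRX'
        have hX'a : 1 < X' ^ a := one_lt_pow₀ (lt_trans hR1 hRX') ha0
        have hY'b : 1 ≤ Y' ^ b := one_le_pow₀ hY'1
        have : X' ^ a ≤ X' ^ a * Y' ^ b := le_mul_of_one_le_right (by positivity) hY'b
        linarith
  -- growth: once above R, the orbit increases by at least δ each step
  set δ : ℝ := (1 - p) * (R - 1) / p with hδdef
  have hδ0 : 0 < δ := by
    apply div_pos _ hp
    nlinarith
  have grow : ∀ z n, R < ‖u n z‖ →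
      ‖u n z‖ + δ ≤ ‖u (n + 1) z‖ := by
    intro z n hX
    have hWn := key n z hX
    set Xn : ℝ := ‖u n z‖ with hXn
    have hXn1 : 1 ≤ Xn := le_of_lt (lt_trans hR1 hX)
    have hXa : Xn ≤ Xn ^ a := le_self_pow₀ hXn1 ha0
    have hWb : 1 ≤ ‖w n z‖ ^ b := one_le_pow₀ hWn
    have hlow : Xn ≤ Xn ^ a * ‖w n z‖ ^ b := by
      have : Xn ^ a ≤ Xn ^ a * ‖w n z‖ ^ b :=
        le_mul_of_one_le_right (by positivity) hWb
      linarith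
    have h5 := htri2 (u (n + 1) z)
    rw [hrecU n z] at h5
    -- p * |u (n+1)| + (1 - p) ≥ Xn
    have h6 : Xn ≤ p * ‖u (n + 1) z‖ + (1 - p) := by linarith
    -- conclude
    have hpδ : p * δ = (1 - p) * (R - 1) := by rw [hδdef]; field_simp
    have h7 : (1 - p) * R ≤ (1 - p) * Xn := mul_le_mul_of_nonneg_left hX.le hq0.le
    have h8 : p * (Xn + δ) ≤ p * ‖u (n + 1) z‖ := by nlinarith
    exact le_of_mul_le_mul_left h8 hp
  -- main backward implication
  have main : ∀ (z : ℂ) (n : ℕ),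
      ‖u (n + 1) z‖ ≤ R → ‖u n z‖ ≤ R := by
    intro z n h
    by_contra hgt
    push_neg at hgt
    have := grow z n hgt
    linarith
  -- linear escape to infinity
  have lin : ∀ z n, R < ‖u n z‖ →
      ∀ k : ℕ, R + k * δ < ‖u (n + k) z‖ := by
    intro z n hX k
    induction k with
    | zero => simpa using hX
    | succ k ihk =>
      have hk0 : (0 : ℝ) ≤ (k : ℝ) * δ := by positivity
      have hRk : R < ‖u (n + k) z‖ := by linarith
      have hstep := grow z (n + k) hRk
      have hidx : n + (k + 1) = (n + k) + 1 := by omega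
      rw [hidx]
      push_cast
      nlinarith [hstep, ihk]
  refine ⟨R, hR1, main, ?_, ?_⟩
  · intro n z hz
    exact main z n hz
  · ext z
    simp only [Set.mem_setOf_eq, Set.mem_iInter]
    constructor
    · rintro ⟨C, hC⟩ n
      by_contra hgt
      push_neg at hgt
      obtain ⟨k, hk⟩ := exists_nat_gt ((C - R) / δ)
      have h8 : C - R < k * δ := by
        rw [div_lt_iff₀ hδ0] at hk
        linarith
      have h9 := lin z n hgt k
      have h10 := hC (n + k)
      linarith
    · intro h
      exact ⟨R, fun n => h n⟩
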